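/- The total connectivity φ^tot(W), defined as the sum over input nodes i ∈ V_1 and output nodes m ∈ V_K of the sum over all input-to-output paths γ of the product Π_k θ(W)_{γ_k} of normalized weights along the path, satisfies 0 ≤ φ^tot(W) ≤ 1. -/
import Mathlib


open Finset

/-- Contiguity of an edge sequence: consecutive edges share endpoints. -/
def Contig (K : ℕ) (γ : Fin (K-1) → ℕ × ℕ) : Prop :=
  ∀ k : Fin (K-1), ∀ h : k.val + 1 < K - 1, (γ k).2 = (γ ⟨k.val + 1, h⟩).1

instance (K : ℕ) (γ : Fin (K-1) → ℕ × ℕ) : Decidable (Contig K γ) := by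
  unfold Contig; infer_instance

/-- Total connectivity: sum over all contiguous input-to-output edge sequences of
the product of edge weights. -/
noncomputable def phiTot (K : ℕ) (E : ℕ → Finset (ℕ × ℕ)) (θ : ℕ → ℕ → ℕ → ℝ) : ℝ :=
  ∑ γ ∈ (Fintype.piFinset (fun k : Fin (K-1) => E k.val)).filter (fun γ => Contig K γ),
    ∏ k : Fin (K-1), θ k.val (γ k).1 (γ k).2

/-- Total absolute weight of layer k. -/
noncomputable def Snorm (E : ℕ → Finset (ℕ × ℕ)) (W : ℕ → ℕ → ℕ → ℝ) (k : ℕ) : ℝ :=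
  ∑ e ∈ E k, |W k e.1 e.2|

/-- Per-layer normalized weights. -/
noncomputable def thetaNorm (E : ℕ → Finset (ℕ × ℕ)) (W : ℕ → ℕ → ℕ → ℝ)
    (k i j : ℕ) : ℝ :=
  |W k i j| / Snorm E W k

/-- Connectivity from the input layer to node `r` in layer `l`. -/
noncomputable def aIn (E : ℕ → Finset (ℕ × ℕ)) (θ : ℕ → ℕ → ℕ → ℝ) (l r : ℕ) : ℝ :=
  ∑ γ ∈ (Fintype.piFinset (fun k : Fin l => E k.val)).filter
      (fun γ => (∀ k : Fin l, ∀ h : k.val + 1 < l, (γ k).2 = (γ ⟨k.val + 1, h⟩).1)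
        ∧ ∀ h : 0 < l, (γ ⟨l - 1, by omega⟩).2 = r),
    ∏ k : Fin l, θ k.val (γ k).1 (γ k).2

/-- Connectivity from node `r` in layer `l` to the output layer (layer K-1). -/
noncomputable def aOut (K : ℕ) (E : ℕ → Finset (ℕ × ℕ)) (θ : ℕ → ℕ → ℕ → ℝ)
    (l r : ℕ) : ℝ :=
  ∑ γ ∈ (Fintype.piFinset (fun k : Fin (K - 1 - l) => E (l + k.val))).filter
      (fun γ => (∀ k : Fin (K - 1 - l), ∀ h : k.val + 1 < K - 1 - l,
          (γ k).2 = (γ ⟨k.val + 1, h⟩).1)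
        ∧ ∀ h : 0 < K - 1 - l, (γ ⟨0, h⟩).1 = r),
    ∏ k : Fin (K - 1 - l), θ (l + k.val) (γ k).1 (γ k).2

/-- 0 ≤ φ^tot(W) ≤ 1. -/
theorem phiTot_mem_unit_interval
    (K : ℕ) (E : ℕ → Finset (ℕ × ℕ)) (W : ℕ → ℕ → ℕ → ℝ)
    (h : ∀ k, k < K - 1 → ∃ e ∈ E k, W k e.1 e.2 ≠ 0) :
    0 ≤ phiTot K E (thetaNorm E W) ∧ phiTot K E (thetaNorm E W) ≤ 1 := by
  have hθ : ∀ k i j, 0 ≤ thetaNorm E W k i j := fun k i j =>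
    div_nonneg (abs_nonneg _) (Finset.sum_nonneg fun e _ => abs_nonneg _)
  constructor
  · exact Finset.sum_nonneg fun γ _ => Finset.prod_nonneg fun k _ => hθ _ _ _
  · calc phiTot K E (thetaNorm E W)
        ≤ ∑ γ ∈ Fintype.piFinset (fun k : Fin (K-1) => E k.val),
            ∏ k : Fin (K-1), thetaNorm E W k.val (γ k).1 (γ k).2 := by
          apply Finset.sum_le_sum_of_subset_of_nonneg (Finset.filter_subset _ _)
          exact fun γ _ _ => Finset.prod_nonneg fun k _ => hθ _ _ _
      _ = ∏ k : Fin (K-1), ∑ e ∈ E k.val, thetaNorm E W k.val e.1 e.2 := by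
          rw [Finset.prod_univ_sum]
      _ ≤ 1 := by
          apply Finset.prod_le_one
          · exact fun k _ => Finset.sum_nonneg fun e _ => hθ _ _ _
          · intro k _
            have hS : 0 < Snorm E W k.val := by
              obtain ⟨e, he, hne⟩ := h k.val k.isLt
              exact Finset.sum_pos' (fun e _ => abs_nonneg _) ⟨e, he, abs_pos.mpr hne⟩
            simp only [thetaNorm, ← Finset.sum_div]
            exact le_of_eq (div_self hS.ne')
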